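/- Define moments from free cumulants by M(z) = z/(1 − z F(M(z))) with M(z) = z + Σ_{n≥2} M_{n-1} z^n and F(z) = Σ_{n≥1} F_n z^{n-1} over a field of characteristic zero. Then for all n ≥ 1, M_n = (1/(n+1)) · [z^n] (1 + z F(z))^{n+1}. -/

import Mathlib

noncomputable section
open PowerSeries

/-- Hadamard (coefficientwise) product of formal power series. -/
def hadamard {R : Type*} [CommRing R] (f g : PowerSeries R) : PowerSeries R :=
  PowerSeries.mk fun n => (PowerSeries.coeff n f) * (PowerSeries.coeff n g)
/-- For `H` with zero constant term, this is the composition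
`C(H(z)) = Σ_{k≥1} C_k H(z)^{k-1}` of `C(z) = Σ_{k≥1} C_k z^{k-1}` with `H`. -/
def cser {K : Type*} [Field K] (C : ℕ → K) (H : PowerSeries K) : PowerSeries K :=
  PowerSeries.mk fun n =>
    ∑ k ∈ Finset.range (n + 1), C (k + 1) * PowerSeries.coeff n (H ^ k)

section Aux

variable {K : Type*} [Field K]

lemma coeff_pow_eq_zero' {H : PowerSeries K} (h : constantCoeff H = 0)
    {m k : ℕ} (hmk : m < k) : coeff m (H ^ k) = 0 := by
  obtain ⟨c, hc⟩ := pow_dvd_pow_of_dvd (X_dvd_iff.mpr h) (n := k)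
  rw [hc, coeff_X_pow_mul', if_neg (Nat.not_le.mpr hmk)]

/-- composition A ∘ H -/
def pcomp (A H : PowerSeries K) : PowerSeries K :=
  PowerSeries.mk fun n =>
    ∑ k ∈ Finset.range (n + 1), (coeff k A) * coeff n (H ^ k)

lemma pcomp_mul_coeff (A H G : PowerSeries K) (h : constantCoeff H = 0) (n : ℕ) :
    coeff n (pcomp A H * G) =
      ∑ k ∈ Finset.range (n + 1), coeff k A * coeff n (H ^ k * G) := by
  rw [coeff_mul]
  have h1 : ∀ p ∈ Finset.HasAntidiagonal.antidiagonal n,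
      coeff p.1 (pcomp A H) * coeff p.2 G =
        ∑ k ∈ Finset.range (n + 1), coeff k A * (coeff p.1 (H ^ k) * coeff p.2 G) := by
    intro p hp
    have hp1 : p.1 + 1 ≤ n + 1 := by
      have := Finset.HasAntidiagonal.mem_antidiagonal.mp hp; omega
    rw [pcomp, coeff_mk, Finset.sum_mul]
    rw [Finset.sum_subset (Finset.range_subset_range.mpr hp1)]
    · exact Finset.sum_congr rfl fun k _ => by ring
    · intro k hk hk2
      have : p.1 < k := by simp at hk hk2; omega
      rw [coeff_pow_eq_zero' h this]; ring
  rw [Finset.sum_congr rfl h1, Finset.sum_comm]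
  refine Finset.sum_congr rfl fun k _ => ?_
  rw [← Finset.mul_sum, coeff_mul]

lemma swap_sum {A : Type*} [AddCommMonoid A] (n : ℕ) (f : ℕ × ℕ → A)
    (hf : ∀ p : ℕ × ℕ, n < p.1 + p.2 → f p = 0) :
    ∑ m ∈ Finset.range (n + 1), ∑ p ∈ Finset.HasAntidiagonal.antidiagonal m, f p =
      ∑ p ∈ Finset.range (n + 1) ×ˢ Finset.range (n + 1), f p := by
  rw [← Finset.sum_biUnion]
  · apply Finset.sum_subset
    · intro p hp
      simp only [Finset.mem_biUnion, Finset.mem_range, Finset.HasAntidiagonal.mem_antidiagonal] at hp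
      obtain ⟨m, hm, rfl⟩ := hp
      simp only [Finset.mem_product, Finset.mem_range]
      omega
    · intro p _ hp
      apply hf
      simp only [Finset.mem_biUnion, Finset.mem_range, Finset.HasAntidiagonal.mem_antidiagonal] at hp
      by_contra hc
      exact hp ⟨p.1 + p.2, by omega, rfl⟩
  · intro a _ b _ hab
    simp only [Finset.disjoint_left, Finset.mem_coe, Finset.HasAntidiagonal.mem_antidiagonal]
    intro p hpa hpb
    exact hab (hpa ▸ hpb)

lemma pcomp_mul (A B H : PowerSeries K) (h : constantCoeff H = 0) :
    pcomp (A * B) H = pcomp A H * pcomp B H := by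
  ext n
  have e1 : coeff n (pcomp A H * pcomp B H) =
      ∑ p ∈ Finset.range (n + 1) ×ˢ Finset.range (n + 1),
        coeff p.1 A * coeff p.2 B * coeff n (H ^ (p.1 + p.2)) := by
    rw [pcomp_mul_coeff _ _ _ h, Finset.sum_product]
    refine Finset.sum_congr rfl fun k _ => ?_
    rw [mul_comm (H ^ k), pcomp_mul_coeff _ _ _ h, Finset.mul_sum]
    refine Finset.sum_congr rfl fun j _ => ?_
    rw [← pow_add, add_comm j k]; ring
  rw [e1, pcomp, coeff_mk, ← swap_sum n
    (fun p => coeff p.1 A * coeff p.2 B * coeff n (H ^ (p.1 + p.2)))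
    (fun p hp => by rw [coeff_pow_eq_zero' h hp]; ring)]
  refine Finset.sum_congr rfl fun m hm => ?_
  rw [coeff_mul, Finset.sum_mul]
  refine Finset.sum_congr rfl fun p hp => ?_
  rw [Finset.HasAntidiagonal.mem_antidiagonal.mp hp]

lemma pcomp_one (H : PowerSeries K) : pcomp 1 H = 1 := by
  ext n
  rw [pcomp, coeff_mk]
  have : ∀ k ∈ Finset.range (n + 1), coeff k (1 : PowerSeries K) * coeff n (H ^ k)
      = if k = 0 then coeff n (1 : PowerSeries K) else 0 := by
    intro k _
    rcases Nat.eq_zero_or_pos k with rfl | hk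
    · simp
    · rw [coeff_one, if_neg (by omega), zero_mul, if_neg (by omega)]
  rw [Finset.sum_congr rfl this, Finset.sum_ite_eq' (Finset.range (n+1)) 0,
    if_pos (Finset.mem_range.mpr (by omega))]

lemma pcomp_pow (A H : PowerSeries K) (h : constantCoeff H = 0) (m : ℕ) :
    pcomp (A ^ m) H = (pcomp A H) ^ m := by
  induction m with
  | zero => simpa using pcomp_one H
  | succ m ih => rw [pow_succ, pcomp_mul _ _ _ h, ih, pow_succ]

lemma pcomp_add (A B H : PowerSeries K) : pcomp (A + B) H = pcomp A H + pcomp B H := by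
  ext n
  simp only [pcomp, map_add, coeff_mk, add_mul, Finset.sum_add_distrib]

lemma pcomp_X_mul (A H : PowerSeries K) (h : constantCoeff H = 0) :
    pcomp (X * A) H = H * pcomp A H := by
  ext n
  rw [pcomp, coeff_mk, Finset.sum_range_succ', mul_comm H, pcomp_mul_coeff _ _ _ h,
    Finset.sum_range_succ]
  have h0 : coeff 0 (X * A) * coeff n (H ^ 0) = 0 := by
    simp [coeff_zero_eq_constantCoeff]
  have hn : coeff n A * coeff n (H ^ n * H) = 0 := by
    rw [← pow_succ, coeff_pow_eq_zero' h (by omega)]; ring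
  rw [h0, hn, add_zero, add_zero]
  refine Finset.sum_congr rfl fun i _ => ?_
  rw [coeff_succ_X_mul, pow_succ]

lemma resid [CharZero K] (Φ : PowerSeries K) (h0 : constantCoeff Φ = 1) (i : ℕ) :
    coeff i ((Φ⁻¹) ^ (i + 1) * d⁄dX K (X * Φ)) = if i = 0 then 1 else 0 := by
  have hne : constantCoeff Φ ≠ 0 := by rw [h0]; exact one_ne_zero
  have hD : d⁄dX K (X * Φ) = X * d⁄dX K Φ + Φ := by
    rw [Derivation.leibniz, derivative_X, smul_eq_mul, smul_eq_mul, mul_one]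
  rcases Nat.eq_zero_or_pos i with rfl | hi
  · rw [if_pos rfl, coeff_zero_eq_constantCoeff, map_mul, map_pow, constantCoeff_inv, h0, hD,
      map_add, map_mul, constantCoeff_X]
    simp [h0]
  obtain ⟨m, rfl⟩ : ∃ m, i = m + 1 := ⟨i - 1, by omega⟩
  set Ψ := Φ⁻¹ with hΨ
  set DΦ := d⁄dX K Φ with hDΦ
  rw [if_neg (by omega), hD, mul_add]
  have hinv : Ψ * Φ = 1 := PowerSeries.inv_mul_cancel _ hne
  have e2 : Ψ ^ (m + 1 + 1) * Φ = Ψ ^ (m + 1) := by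
    rw [pow_succ, mul_assoc, hinv, mul_one]
  have hpow : d⁄dX K (Ψ ^ (m + 1)) = (m + 1) • (-(Ψ ^ (m + 1 + 1) * DΦ)) := by
    rw [Derivation.leibniz_pow, derivative_inv', ← hDΦ, ← hΨ, Nat.add_sub_cancel, smul_eq_mul]
    congr 1
    ring
  set c := coeff (m + 1) (Ψ ^ (m + 1)) with hc
  set t := coeff m (Ψ ^ (m + 1 + 1) * DΦ) with ht
  have hm1 : ((m : K) + 1) ≠ 0 := Nat.cast_add_one_ne_zero m
  have e4 := congrArg (coeff m) hpow
  rw [coeff_derivative, map_nsmul, map_neg, nsmul_eq_mul, ← ht, ← hc] at e4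
  push_cast at e4
  have e5 : t = -c := by
    have h2 : ((m : K) + 1) * t = ((m : K) + 1) * (-c) := by linear_combination e4
    exact mul_left_cancel₀ hm1 h2
  have e6 : Ψ ^ (m + 1 + 1) * (X * DΦ) = X * (Ψ ^ (m + 1 + 1) * DΦ) := by ring
  rw [map_add, e6, coeff_succ_X_mul, ← ht, e5, e2, ← hc]
  ring

lemma coeff_X_pow_mul'' (g : PowerSeries K) {k m : ℕ} (h : k ≤ m) :
    coeff m (X ^ k * g) = coeff (m - k) g := by
  rw [coeff_X_pow_mul', if_pos h]


end Aux

theorem moments_from_free_cumulants {K : Type*} [Field K] [CharZero K]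
    (F Mo : ℕ → K) (M : PowerSeries K)
    (hM0 : PowerSeries.coeff 0 M = 0) (hM1 : PowerSeries.coeff 1 M = 1)
    (hM : ∀ n, 2 ≤ n → PowerSeries.coeff n M = Mo (n - 1))
    -- the functional equation `M(z) = z / (1 - z·F(M(z)))`:
    (heq : M * (1 - PowerSeries.X * cser F M) = PowerSeries.X) :
    ∀ n : ℕ, 1 ≤ n →
      Mo n = (1 / ((n : K) + 1)) *
        PowerSeries.coeff n
          ((1 + PowerSeries.X * PowerSeries.mk fun k => F (k + 1)) ^ (n + 1)) := by
  intro n hn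
  set f : PowerSeries K := PowerSeries.mk fun k => F (k + 1) with hf
  set φ : PowerSeries K := 1 + PowerSeries.X * f with hφ
  set Φ : PowerSeries K := 1 + M * cser F M with hΦdef
  have hMc : constantCoeff M = 0 := by rw [← coeff_zero_eq_constantCoeff]; exact hM0
  have hcser : cser F M = pcomp f M := by
    ext k
    simp only [cser, pcomp, coeff_mk, hf]
  have hφM : pcomp φ M = Φ := by
    rw [hφ, pcomp_add, pcomp_one, pcomp_X_mul _ _ hMc, ← hcser, hΦdef]
  have hMeq : M = X * Φ := by rw [hΦdef]; linear_combination heq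
  have hΦ0 : constantCoeff Φ = 1 := by
    rw [hΦdef, map_add, map_one, map_mul, hMc, zero_mul, add_zero]
  have hΦne : constantCoeff Φ ≠ 0 := by rw [hΦ0]; exact one_ne_zero
  set Ψ := Φ⁻¹ with hΨ
  have hΦΨ : Φ * Ψ = 1 := PowerSeries.mul_inv_cancel _ hΦne
  have key : ∀ k, k ≤ n → coeff n (M ^ k * (Ψ ^ (n + 1) * d⁄dX K M))
      = if k = n then 1 else 0 := by
    intro k hk
    have e1 : M ^ k * (Ψ ^ (n + 1) * d⁄dX K M)
        = X ^ k * (Ψ ^ ((n - k) + 1) * d⁄dX K (X * Φ)) := by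
      conv_lhs => rw [hMeq]
      rw [mul_pow, show n + 1 = ((n - k) + 1) + k by omega, pow_add Ψ]
      have hck : Φ ^ k * Ψ ^ k = 1 := by rw [← mul_pow, hΦΨ, one_pow]
      calc X ^ k * Φ ^ k * (Ψ ^ ((n - k) + 1) * Ψ ^ k * d⁄dX K (X * Φ))
          = (Φ ^ k * Ψ ^ k) * (X ^ k * (Ψ ^ ((n - k) + 1) * d⁄dX K (X * Φ))) := by ring
        _ = X ^ k * (Ψ ^ ((n - k) + 1) * d⁄dX K (X * Φ)) := by rw [hck, one_mul]
    rw [e1, coeff_X_pow_mul'' _ hk, resid Φ hΦ0 (n - k)]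
    by_cases hkn : k = n
    · rw [if_pos (by omega), if_pos hkn]
    · rw [if_neg (by omega), if_neg hkn]
  have hDM : coeff n (d⁄dX K M) = coeff n (φ ^ (n + 1)) := by
    have h1 : d⁄dX K M = Φ ^ (n + 1) * (Ψ ^ (n + 1) * d⁄dX K M) := by
      rw [← mul_assoc, ← mul_pow, hΦΨ, one_pow, one_mul]
    conv_lhs => rw [h1, ← hφM, ← pcomp_pow _ _ hMc]
    rw [pcomp_mul_coeff _ _ _ hMc]
    rw [Finset.sum_congr rfl (fun k hk =>
      by rw [key k (Nat.lt_succ_iff.mp (Finset.mem_range.mp hk))])]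
    simp only [mul_ite, mul_one, mul_zero]
    rw [Finset.sum_ite_eq' (Finset.range (n + 1)) n, if_pos (Finset.mem_range.mpr (by omega))]
  have hMn : coeff (n + 1) M = Mo n := by
    have := hM (n + 1) (by omega)
    simpa using this
  have hd : coeff n (d⁄dX K M) = coeff (n + 1) M * ((n : K) + 1) := by
    rw [coeff_derivative]
  have hfin : coeff n (φ ^ (n + 1)) = Mo n * ((n : K) + 1) := by
    rw [← hDM, hd, hMn]
  rw [hfin]
  have hm1 : ((n : K) + 1) ≠ 0 := Nat.cast_add_one_ne_zero n
  field_simp
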